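/- For any tree T, the core c(T), defined as the subgraph induced by all vertices v such that T - v has at least two infinite components, is connected (hence a subtree of T). -/

import Mathlib

open SimpleGraph Set

/-- A leaf of a graph: a vertex with exactly one neighbor (degree 1). -/
def IsLeaf {V : Type*} (G : SimpleGraph V) (x : V) : Prop :=
  (G.neighborSet x).encard = 1

/-- `v` is in the core `c(T)`: deleting `v` leaves at least two infinite components. -/
def InCore {V : Type*} (G : SimpleGraph V) (v : V) : Prop :=
  ∃ C D : (G.induce {u | u ≠ v}).ConnectedComponent,
    C ≠ D ∧ C.supp.Infinite ∧ D.supp.Infinite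

/-- Lift a walk whose support stays in `S` to the induced subgraph on `S`. -/
lemma lift_walk {V : Type*} {G : SimpleGraph V} {S : Set V} :
    ∀ {a b : V} (p : G.Walk a b) (hp : ∀ x ∈ p.support, x ∈ S),
    (G.induce S).Reachable ⟨a, hp a p.start_mem_support⟩ ⟨b, hp b p.end_mem_support⟩ := by
  intro a b p
  induction p with
  | nil => intro hp; exact Reachable.refl _
  | @cons a c b h q ih =>
    intro hp
    have hq : ∀ x ∈ q.support, x ∈ S := fun x hx => hp x (by simp [hx])
    have ha : a ∈ S := hp a (by simp)
    have hadj : (G.induce S).Adj ⟨a, ha⟩ ⟨c, hq c q.start_mem_support⟩ := h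
    exact hadj.reachable.trans (ih hq)

/-- If `u` is in the core and `w ≠ u`, then the component of `u` in `G - w` is infinite. -/
lemma core_component_infinite {V : Type*} {G : SimpleGraph V} (hT : G.IsTree)
    {u w : V} (hu : InCore G u) (hw : w ≠ u) :
    ((G.induce {z | z ≠ w}).connectedComponentMk ⟨u, hw.symm⟩).supp.Infinite := by
  classical
  obtain ⟨C, D, hCD, hCinf, hDinf⟩ := hu
  -- pick an infinite component of `G - u` not containing `w`
  have key : ∃ C : (G.induce {z | z ≠ u}).ConnectedComponent,
      C.supp.Infinite ∧ (⟨w, hw⟩ : {z | z ≠ u}) ∉ C.supp := by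
    by_cases hC : (⟨w, hw⟩ : {z | z ≠ u}) ∈ C.supp
    · refine ⟨D, hDinf, fun hD => hCD ?_⟩
      rw [ConnectedComponent.mem_supp_iff] at hC hD
      rw [← hC, hD]
    · exact ⟨C, hCinf, hC⟩
  obtain ⟨E, hEinf, hwE⟩ := key
  have hsub : Subtype.val '' E.supp ⊆
      Subtype.val '' ((G.induce {z | z ≠ w}).connectedComponentMk ⟨u, hw.symm⟩).supp := by
    rintro _ ⟨x, hxE, rfl⟩
    have hxu : x.1 ≠ u := x.2
    have hxw : x.1 ≠ w := by
      rintro rfl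
      exact hwE (by rwa [show (⟨x.1, hw⟩ : {z | z ≠ u}) = x from Subtype.ext rfl])
    -- the tree path from `u` to `x` avoids `w`
    obtain ⟨P, hP⟩ := (hT.isConnected.preconnected u x.1).some.toPath
    obtain ⟨c, hadj, q, rfl⟩ := Walk.exists_eq_cons_of_ne (fun h => hxu h.symm) P
    · rw [Walk.cons_isPath_iff] at hP
      have huq : u ∉ q.support := hP.2
      have hq_ne_w : ∀ y ∈ q.support, y ≠ w := by
        intro y hy
        have hyu : y ≠ u := fun h => huq (h ▸ hy)
        -- `y` lies in the component `E` of `G - u`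
        have hr : (G.induce {z | z ≠ u}).Reachable ⟨y, hyu⟩ x := by
          have hsub' := Walk.support_dropUntil_subset q hy
          have := lift_walk (G := G) (S := {z | z ≠ u}) (q.dropUntil y hy)
            (fun z hz => fun h => huq (h ▸ hsub' hz))
          exact this
        have : (⟨y, hyu⟩ : {z | z ≠ u}) ∈ E.supp := by
          rw [ConnectedComponent.mem_supp_iff, ConnectedComponent.sound hr,
            ← ConnectedComponent.mem_supp_iff]
          exact hxE
        intro h
        exact hwE (by rwa [show (⟨w, hw⟩ : {z | z ≠ u}) = ⟨y, hyu⟩ from Subtype.ext h.symm])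
      have hall : ∀ z ∈ (Walk.cons hadj q).support, z ∈ {z | z ≠ w} := by
        intro z hz
        rw [Walk.support_cons, List.mem_cons] at hz
        rcases hz with rfl | hz
        · exact Ne.symm hw
        · exact hq_ne_w z hz
      have hr2 := lift_walk (G := G) (S := {z | z ≠ w}) (Walk.cons hadj q) hall
      exact ⟨⟨x.1, hxw⟩, by
        rw [ConnectedComponent.mem_supp_iff]
        exact ConnectedComponent.sound hr2.symm, rfl⟩
  have himg : (Subtype.val '' E.supp).Infinite :=
    hEinf.image (Subtype.val_injective.injOn)
  exact Set.Infinite.of_image Subtype.val ((himg.mono hsub))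

/-- Every vertex on the path between two core vertices is in the core. -/
lemma mem_core_of_mem_path {V : Type*} {G : SimpleGraph V} (hT : G.IsTree)
    {u v w : V} (hu : InCore G u) (hv : InCore G v)
    {P : G.Walk u v} (hP : P.IsPath) (hw : w ∈ P.support) : InCore G w := by
  classical
  by_cases hwu : w = u
  · exact hwu ▸ hu
  by_cases hwv : w = v
  · exact hwv ▸ hv
  have hwu' : w ≠ u := hwu
  have hwv' : w ≠ v := hwv
  refine ⟨(G.induce {z | z ≠ w}).connectedComponentMk ⟨u, fun h => hwu (h.symm)⟩,
    (G.induce {z | z ≠ w}).connectedComponentMk ⟨v, fun h => hwv (h.symm)⟩, ?_, ?_, ?_⟩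
  · -- distinct: u and v are not reachable in G - w
    intro h
    have hr : (G.induce {z | z ≠ w}).Reachable ⟨u, _⟩ ⟨v, _⟩ := ConnectedComponent.exact h
    obtain ⟨q'⟩ := hr
    set q : G.Walk u v := q'.map (SimpleGraph.Embedding.induce {z | z ≠ w}).toHom with hqdef
    have hwq : w ∉ q.support := by
      rw [hqdef]
      erw [Walk.support_map]
      rintro hmem
      obtain ⟨z, _, hz⟩ := List.mem_map.mp hmem
      exact z.2 hz
    -- but every walk from u to v passes through w, by path uniqueness
    have huniq := isAcyclic_iff_path_unique.mp hT.IsAcyclic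
    have : q.toPath = (⟨P, hP⟩ : G.Path u v) := huniq _ _
    have hwq' : w ∈ q.toPath.1.support := by rw [this]; exact hw
    exact hwq (Walk.support_toPath_subset q hwq')
  · exact core_component_infinite hT hu (fun h => hwu h)
  · exact core_component_infinite hT hv (fun h => hwv h)

/-- the core of an infinite tree is connected. -/
theorem stmt_4 {V : Type*} (G : SimpleGraph V) (hT : G.IsTree)
    (hinf : Infinite V) :
    (G.induce {v | InCore G v}).Preconnected := by
  classical
  intro a b
  obtain ⟨P, hP⟩ := (hT.isConnected.preconnected a.1 b.1).some.toPath
  have hall : ∀ x ∈ P.support, x ∈ {v | InCore G v} := fun x hx =>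
    mem_core_of_mem_path hT a.2 b.2 hP hx
  have := lift_walk (G := G) (S := {v | InCore G v}) P hall
  exact this
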